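/- arXiv:1908.02725 — 5 statements merged into one kernel-verified Lean document; each statement's English description precedes it below -/
import Mathlib

section
/- Under the expected smoothness inequality E[‖∇f_v(x) − ∇f_v(x*)‖²] ≤ 2𝓛(f(x)−f(x*)), μ-strong convexity of f, unbiasedness E[∇f_v(x)] = ∇f(x), the expected residual can be taken as ρ = 𝓛 − μ: for all x, E[‖∇f_v(x) − ∇f_v(x*) − ∇f(x)‖²] ≤ 2(𝓛 − μ)(f(x) − f(x*)). -/
open MeasureTheory
open scoped InnerProductSpace

theorem expected_residual_bound {Ω : Type*} [MeasureSpace Ω]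
    [IsProbabilityMeasure (volume : Measure Ω)] (d : ℕ)
    (f : EuclideanSpace ℝ (Fin d) → ℝ)
    (g : EuclideanSpace ℝ (Fin d) → EuclideanSpace ℝ (Fin d))
    (gv : Ω → EuclideanSpace ℝ (Fin d) → EuclideanSpace ℝ (Fin d))
    (μ L : ℝ) (hμ : 0 < μ) (hL : 0 ≤ L)
    (xs : EuclideanSpace ℝ (Fin d)) (hmin : ∀ y, f xs ≤ f y) (hgrad0 : g xs = 0)
    (hsc : ∀ x y, f x ≤ f y + ⟪g x, x - y⟫_ℝ - μ / 2 * ‖x - y‖ ^ 2)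
    (hPL : ∀ x, 1 / (2 * μ) * ‖g x‖ ^ 2 ≥ f x - f xs)
    (hunb : ∀ x, (∫ ω, gv ω x) = g x)
    (hint1 : ∀ x, Integrable (fun ω => gv ω x - gv ω xs))
    (hint2 : ∀ x, Integrable (fun ω => ‖gv ω x - gv ω xs‖ ^ 2))
    (hES : ∀ x, (∫ ω, ‖gv ω x - gv ω xs‖ ^ 2) ≤ 2 * L * (f x - f xs)) :
    ∀ x, (∫ ω, ‖gv ω x - gv ω xs - g x‖ ^ 2) ≤ 2 * (L - μ) * (f x - f xs) := by
  intro x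
  have hfx : 0 ≤ f x - f xs := sub_nonneg.2 (hmin x)
  by_cases hI : Integrable (fun ω => gv ω xs)
  · have hIx : Integrable (fun ω => gv ω x) := by
      have := (hint1 x).add hI
      exact this.congr (Filter.Eventually.of_forall fun ω => by simp [Pi.add_apply])
    have hEY : (∫ ω, gv ω x - gv ω xs) = g x := by
      rw [integral_sub hIx hI, hunb x, hunb xs, hgrad0, sub_zero]
    have hinner : Integrable (fun ω => ⟪g x, gv ω x - gv ω xs⟫_ℝ) :=
      (innerSL ℝ (g x)).integrable_comp (hint1 x)
    have hPLx : 2 * μ * (f x - f xs) ≤ ‖g x‖ ^ 2 := by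
      have h := hPL x
      have hμ' : (0:ℝ) < 2 * μ := by linarith
      rw [ge_iff_le, one_div, inv_mul_eq_div, le_div_iff₀ hμ'] at h
      nlinarith
    have key : (∫ ω, ‖gv ω x - gv ω xs - g x‖ ^ 2)
        = (∫ ω, ‖gv ω x - gv ω xs‖ ^ 2) - ‖g x‖ ^ 2 := by
      have h1 : ∀ ω : Ω, ‖gv ω x - gv ω xs - g x‖ ^ 2
          = ‖gv ω x - gv ω xs‖ ^ 2 - 2 * ⟪g x, gv ω x - gv ω xs⟫_ℝ + ‖g x‖ ^ 2 := by
        intro ω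
        rw [norm_sub_sq_real, real_inner_comm]
      calc (∫ ω, ‖gv ω x - gv ω xs - g x‖ ^ 2)
          = ∫ ω, (‖gv ω x - gv ω xs‖ ^ 2 - 2 * ⟪g x, gv ω x - gv ω xs⟫_ℝ + ‖g x‖ ^ 2) := by
            simp_rw [h1]
        _ = (∫ ω, ‖gv ω x - gv ω xs‖ ^ 2) - 2 * ⟪g x, ∫ ω, gv ω x - gv ω xs⟫_ℝ + ‖g x‖ ^ 2 := by
            have hA : Integrable (fun ω => ‖gv ω x - gv ω xs‖ ^ 2
                - 2 * ⟪g x, gv ω x - gv ω xs⟫_ℝ) := (hint2 x).sub (hinner.const_mul 2)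
            rw [integral_add hA (integrable_const (‖g x‖ ^ 2)),
              integral_sub (hint2 x) (hinner.const_mul 2), integral_const_mul,
              integral_inner (hint1 x), integral_const]
            simp
        _ = (∫ ω, ‖gv ω x - gv ω xs‖ ^ 2) - ‖g x‖ ^ 2 := by
            rw [hEY, real_inner_self_eq_norm_sq]; ring
    rw [key]
    have := hES x
    nlinarith
  · have hx0 : ¬ Integrable (fun ω => gv ω x) := by
      intro h
      exact hI ((h.sub (hint1 x)).congr
        (Filter.Eventually.of_forall fun ω => by simp [Pi.sub_apply]))
    have hgx : g x = 0 := by rw [← hunb x, integral_undef hx0]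
    have heq : f x - f xs = 0 := by
      have h := hPL x
      rw [hgx] at h
      simp at h
      linarith
    have h2 := hES x
    rw [heq] at h2 ⊢
    simpa [hgx] using h2
end

section
/- Let g(x,w) = ∇f_v(x) − ∇f_v(w) + ∇f(w). If the expected smoothness inequality E[‖∇f_v(x)−∇f_v(x*)‖²] ≤ 2𝓛(f(x)−f(x*)) and expected residual inequality E[‖∇f_v(w)−∇f_v(x*)−∇f(w)‖²] ≤ 2ρ(f(w)−f(x*)) hold, then E[‖g(x,w)‖²] ≤ 4𝓛(f(x)−f(x*)) + 4ρ(f(w)−f(x*)). -/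
open MeasureTheory

theorem variance_reduced_gradient_bound {Ω : Type*} [MeasureSpace Ω]
    [IsProbabilityMeasure (volume : Measure Ω)] (d : ℕ)
    (f : EuclideanSpace ℝ (Fin d) → ℝ)
    (G : EuclideanSpace ℝ (Fin d) → EuclideanSpace ℝ (Fin d))
    (gv : Ω → EuclideanSpace ℝ (Fin d) → EuclideanSpace ℝ (Fin d))
    (L ρ : ℝ) (hL : 0 ≤ L) (hρ : 0 ≤ ρ)
    (xs : EuclideanSpace ℝ (Fin d)) (hmin : ∀ y, f xs ≤ f y) (hgrad0 : G xs = 0)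
    (hint1 : ∀ x, Integrable (fun ω => ‖gv ω x - gv ω xs‖ ^ 2))
    (hint2 : ∀ w, Integrable (fun ω => ‖gv ω w - gv ω xs - G w‖ ^ 2))
    (hES : ∀ x, (∫ ω, ‖gv ω x - gv ω xs‖ ^ 2) ≤ 2 * L * (f x - f xs))
    (hER : ∀ w, (∫ ω, ‖gv ω w - gv ω xs - G w‖ ^ 2) ≤ 2 * ρ * (f w - f xs)) :
    ∀ x w, (∫ ω, ‖gv ω x - gv ω w + G w‖ ^ 2)
      ≤ 4 * L * (f x - f xs) + 4 * ρ * (f w - f xs) := by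
  intro x w
  have key : (∫ ω, ‖gv ω x - gv ω w + G w‖ ^ 2)
      ≤ ∫ ω, (2 * ‖gv ω x - gv ω xs‖ ^ 2 + 2 * ‖gv ω w - gv ω xs - G w‖ ^ 2) := by
    apply integral_mono_of_nonneg
    · filter_upwards with ω; positivity
    · exact ((hint1 x).const_mul 2).add ((hint2 w).const_mul 2)
    · filter_upwards with ω
      have hid : gv ω x - gv ω w + G w
          = (gv ω x - gv ω xs) - (gv ω w - gv ω xs - G w) := by abel
      rw [hid]
      calc ‖(gv ω x - gv ω xs) - (gv ω w - gv ω xs - G w)‖ ^ 2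
          ≤ (‖gv ω x - gv ω xs‖ + ‖gv ω w - gv ω xs - G w‖) ^ 2 := by
            gcongr; exact norm_sub_le _ _
        _ ≤ 2 * ‖gv ω x - gv ω xs‖ ^ 2 + 2 * ‖gv ω w - gv ω xs - G w‖ ^ 2 := by
            nlinarith [sq_nonneg (‖gv ω x - gv ω xs‖ - ‖gv ω w - gv ω xs - G w‖)]
  rw [integral_add ((hint1 x).const_mul 2) ((hint2 w).const_mul 2),
    integral_const_mul, integral_const_mul] at key
  have h1 := hES x
  have h2 := hER w
  linarith
end

section
/- Let v be a sampling vector with v_i ≥ 0 a.s. and E[v]=𝟙, each f_i convex and L_i-smooth, L_max = max_i L_i. Then for all w, E[‖∇f_v(w) − ∇f_v(x*) − (∇f(w) − ∇f(x*))‖²] ≤ 2·(λ_max(Var(v))/n)·L_max·(f(w) − f(x*)), where Var(v) = E[(v−𝟙)(v−𝟙)ᵀ]. -/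
open MeasureTheory
open scoped InnerProductSpace

section QuadAux

lemma innerE {m : ℕ} (x y : EuclideanSpace ℝ (Fin m)) : ⟪x, y⟫_ℝ = ∑ k, x k * y k := by
  simp [PiLp.inner_apply, RCLike.inner_apply, mul_comm]

lemma quad_form_le {n : ℕ} {A : Matrix (Fin n) (Fin n) ℝ} (hA : A.IsHermitian)
    (x : EuclideanSpace ℝ (Fin n)) :
    ⟪x, Matrix.toEuclideanLin A x⟫_ℝ ≤ (⨆ i, hA.eigenvalues i) * ⟪x, x⟫_ℝ := by
  rcases Nat.eq_zero_or_pos n with h0 | hpos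
  · subst h0
    simp [inner]
  have hne : Nonempty (Fin n) := Fin.pos_iff_nonempty.mp hpos
  set b := hA.eigenvectorBasis with hb
  have hTb : ∀ j, Matrix.toEuclideanLin A (b j) = hA.eigenvalues j • b j := by
    intro j
    apply PiLp.ext
    intro k
    have := congrFun (hA.mulVec_eigenvectorBasis j) k
    simpa [Matrix.toEuclideanLin_apply] using this
  have hexp : ∀ y : EuclideanSpace ℝ (Fin n),
      ⟪x, y⟫_ℝ = ∑ j, ⟪x, b j⟫_ℝ * ⟪b j, y⟫_ℝ :=
    fun y => (b.sum_inner_mul_inner x y).symm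
  rw [hexp (Matrix.toEuclideanLin A x), hexp x]
  have h1 : ∀ j, ⟪b j, Matrix.toEuclideanLin A x⟫_ℝ = hA.eigenvalues j * ⟪b j, x⟫_ℝ := by
    intro j
    have hsym := Matrix.isHermitian_iff_isSymmetric.mp hA
    calc ⟪b j, Matrix.toEuclideanLin A x⟫_ℝ = ⟪Matrix.toEuclideanLin A (b j), x⟫_ℝ :=
          (hsym (b j) x).symm
      _ = hA.eigenvalues j * ⟪b j, x⟫_ℝ := by rw [hTb j, real_inner_smul_left]
  have hbdd : BddAbove (Set.range hA.eigenvalues) := Set.Finite.bddAbove (Set.finite_range _)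
  calc ∑ j, ⟪x, b j⟫_ℝ * ⟪b j, Matrix.toEuclideanLin A x⟫_ℝ
      = ∑ j, hA.eigenvalues j * (⟪x, b j⟫_ℝ * ⟪b j, x⟫_ℝ) := by
        refine Finset.sum_congr rfl fun j _ => ?_
        rw [h1 j]; ring
    _ ≤ ∑ j, (⨆ i, hA.eigenvalues i) * (⟪x, b j⟫_ℝ * ⟪b j, x⟫_ℝ) := by
        refine Finset.sum_le_sum fun j _ => ?_
        have hnn : 0 ≤ ⟪x, b j⟫_ℝ * ⟪b j, x⟫_ℝ := by
          rw [real_inner_comm x (b j)]; exact mul_self_nonneg _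
        exact mul_le_mul_of_nonneg_right (le_ciSup hbdd j) hnn
    _ = (⨆ i, hA.eigenvalues i) * ∑ j, ⟪x, b j⟫_ℝ * ⟪b j, x⟫_ℝ := by
        rw [Finset.mul_sum]

lemma quad_vec {n d : ℕ} {A : Matrix (Fin n) (Fin n) ℝ} (hA : A.IsHermitian)
    (a : Fin n → EuclideanSpace ℝ (Fin d)) :
    ∑ i, ∑ j, A i j * ⟪a i, a j⟫_ℝ ≤ (⨆ i, hA.eigenvalues i) * ∑ i, ‖a i‖ ^ 2 := by
  have hnorm : ∀ (x : EuclideanSpace ℝ (Fin d)), ‖x‖ ^ 2 = ∑ k, x k * x k := by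
    intro x; rw [← real_inner_self_eq_norm_sq, innerE]
  have e1 : ∑ i, ∑ j, A i j * ⟪a i, a j⟫_ℝ
      = ∑ k : Fin d, ∑ i, ∑ j, A i j * (a i k * a j k) := by
    have h1 : ∀ i, ∑ j, A i j * ⟪a i, a j⟫_ℝ = ∑ k : Fin d, ∑ j, A i j * (a i k * a j k) := by
      intro i
      rw [Finset.sum_comm]
      exact Finset.sum_congr rfl fun j _ => by rw [innerE, Finset.mul_sum]
    rw [Finset.sum_congr rfl fun i _ => h1 i, Finset.sum_comm]
  rw [e1]
  have key : ∀ k : Fin d, ∑ i, ∑ j, A i j * (a i k * a j k)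
      ≤ (⨆ i, hA.eigenvalues i) * ∑ i, a i k * a i k := by
    intro k
    set x : EuclideanSpace ℝ (Fin n) := WithLp.toLp 2 (fun i => a i k) with hxdef
    have hx : ∀ i, (Matrix.toEuclideanLin A x) i = ∑ j, A i j * x j := by
      intro i
      simp [Matrix.toEuclideanLin_apply, Matrix.mulVec, dotProduct]
    calc ∑ i, ∑ j, A i j * (a i k * a j k) = ⟪x, Matrix.toEuclideanLin A x⟫_ℝ := by
          rw [innerE]
          refine Finset.sum_congr rfl fun i _ => ?_
          rw [hx i, Finset.mul_sum]
          exact Finset.sum_congr rfl fun j _ => by simp only [hxdef]; ring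
      _ ≤ (⨆ i, hA.eigenvalues i) * ⟪x, x⟫_ℝ := quad_form_le hA x
      _ = (⨆ i, hA.eigenvalues i) * ∑ i, a i k * a i k := by rw [innerE]
  calc ∑ k : Fin d, ∑ i, ∑ j, A i j * (a i k * a j k)
      ≤ ∑ k : Fin d, (⨆ i, hA.eigenvalues i) * ∑ i, a i k * a i k :=
        Finset.sum_le_sum fun k _ => key k
    _ = (⨆ i, hA.eigenvalues i) * ∑ i, ‖a i‖ ^ 2 := by
        rw [← Finset.mul_sum, Finset.sum_comm]
        exact congrArg _ (Finset.sum_congr rfl fun i _ => (hnorm (a i)).symm)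

lemma diag_le_iSup {n : ℕ} {A : Matrix (Fin n) (Fin n) ℝ} (hA : A.IsHermitian) (i : Fin n) :
    A i i ≤ ⨆ j, hA.eigenvalues j := by
  have h := quad_form_le hA (EuclideanSpace.single i 1)
  have h1 : ⟪(EuclideanSpace.single i 1 : EuclideanSpace ℝ (Fin n)),
      Matrix.toEuclideanLin A (EuclideanSpace.single i 1)⟫_ℝ = A i i := by
    rw [innerE]
    rw [Finset.sum_eq_single i]
    · simp [Matrix.toEuclideanLin_apply, Matrix.mulVec, dotProduct,
        EuclideanSpace.single_apply]
    · intro k _ hk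
      simp [EuclideanSpace.single_apply, hk]
    · simp
  have h2 : ⟪(EuclideanSpace.single i 1 : EuclideanSpace ℝ (Fin n)),
      (EuclideanSpace.single i 1 : EuclideanSpace ℝ (Fin n))⟫_ℝ = 1 := by
    rw [innerE, Finset.sum_eq_single i]
    · simp [EuclideanSpace.single_apply]
    · intro k _ hk; simp [EuclideanSpace.single_apply, hk]
    · simp
  rw [h1, h2, mul_one] at h
  exact h

end QuadAux

section ConvAux
variable {E : Type*} [NormedAddCommGroup E] [InnerProductSpace ℝ E]

lemma coco_aux {Lc : ℝ} {f : E → ℝ} {g : E → E}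
    (hconv : ∀ x y, f y ≥ f x + ⟪g x, y - x⟫_ℝ)
    (hsm : ∀ x y, f x ≤ f y + ⟪g y, x - y⟫_ℝ + Lc / 2 * ‖x - y‖ ^ 2)
    (hL : 0 < Lc) (x y : E) :
    ‖g x - g y‖ ^ 2 ≤ 2 * Lc * (f x - f y - ⟪g y, x - y⟫_ℝ) := by
  set a := g x - g y with ha
  have h1 := hconv y (x - Lc⁻¹ • a)
  have h2 := hsm (x - Lc⁻¹ • a) x
  have e1 : (x - Lc⁻¹ • a) - y = (x - y) - Lc⁻¹ • a := sub_right_comm x (Lc⁻¹ • a) y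
  have e2 : (x - Lc⁻¹ • a) - x = -(Lc⁻¹ • a) := by abel
  rw [e1, inner_sub_right, real_inner_smul_right] at h1
  rw [e2, inner_neg_right, real_inner_smul_right, norm_neg, norm_smul, Real.norm_eq_abs,
    abs_of_pos (inv_pos.mpr hL)] at h2
  have e3 : ⟪g x, a⟫_ℝ - ⟪g y, a⟫_ℝ = ‖a‖ ^ 2 := by
    rw [← inner_sub_left, ← ha, real_inner_self_eq_norm_sq]
  have e4 : Lc⁻¹ * ⟪g x, a⟫_ℝ - Lc⁻¹ * ⟪g y, a⟫_ℝ = Lc⁻¹ * ‖a‖ ^ 2 := by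
    rw [← mul_sub, e3]
  have h5 : Lc⁻¹ * ‖a‖ ^ 2 ≤ (f x - f y - ⟪g y, x - y⟫_ℝ) + Lc / 2 * (Lc⁻¹ * ‖a‖) ^ 2 := by
    linarith
  have e5 : Lc / 2 * (Lc⁻¹ * ‖a‖) ^ 2 = Lc⁻¹ * ‖a‖ ^ 2 / 2 := by
    field_simp
  have h6 : Lc⁻¹ * ‖a‖ ^ 2 / 2 ≤ f x - f y - ⟪g y, x - y⟫_ℝ := by linarith
  have e6 : ‖a‖ ^ 2 = 2 * Lc * (Lc⁻¹ * ‖a‖ ^ 2 / 2) := by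
    field_simp
  rw [e6]
  exact mul_le_mul_of_nonneg_left h6 (by positivity)

lemma grad_eq_of_L0 {f : E → ℝ} {g : E → E}
    (hconv : ∀ x y, f y ≥ f x + ⟪g x, y - x⟫_ℝ)
    (hsm0 : ∀ x y, f x ≤ f y + ⟪g y, x - y⟫_ℝ) (x y : E) : g x = g y := by
  have heq : ∀ p q : E, f p = f q + ⟪g q, p - q⟫_ℝ :=
    fun p q => le_antisymm (hsm0 p q) (hconv q p)
  have key : ∀ z : E, ⟪g x - g y, z - x⟫_ℝ = 0 := by
    intro z
    have h1 := heq z x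
    have h2 := heq z y
    have h3 := heq x y
    have h4 : ⟪g y, z - y⟫_ℝ - ⟪g y, x - y⟫_ℝ = ⟪g y, z - x⟫_ℝ := by
      rw [← inner_sub_right]
      congr 1
      abel
    rw [inner_sub_left]
    have : ⟪g x, z - x⟫_ℝ = ⟪g y, z - x⟫_ℝ := by linarith
    linarith [this]
  have := key (x + (g x - g y))
  rw [add_sub_cancel_left, real_inner_self_eq_norm_sq] at this
  have hn0 : ‖g x - g y‖ = 0 := by
    nlinarith [norm_nonneg (g x - g y)]
  exact sub_eq_zero.mp (norm_eq_zero.mp hn0)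

end ConvAux

lemma memLp_two_mul_integrable {Ω : Type*} [MeasureSpace Ω] {p q : Ω → ℝ}
    (hp : MemLp p 2 (volume : Measure Ω)) (hq : MemLp q 2 (volume : Measure Ω)) :
    Integrable (fun ω => p ω * q ω) := by
  have hm : AEStronglyMeasurable (fun ω => p ω * q ω) volume := hp.1.mul hq.1
  refine Integrable.mono' (hp.integrable_sq.add hq.integrable_sq) hm (ae_of_all _ fun ω => ?_)
  simp only [Pi.add_apply]
  rw [Real.norm_eq_abs, abs_mul]
  nlinarith [abs_nonneg (p ω), abs_nonneg (q ω), sq_abs (p ω), sq_abs (q ω),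
    sq_nonneg (|p ω| - |q ω|)]

set_option maxHeartbeats 2000000 in
theorem expected_residual_constant {Ω : Type*} [MeasureSpace Ω]
    [IsProbabilityMeasure (volume : Measure Ω)] (d n : ℕ) (hn : 1 ≤ n)
    (f : Fin n → EuclideanSpace ℝ (Fin d) → ℝ)
    (g : Fin n → EuclideanSpace ℝ (Fin d) → EuclideanSpace ℝ (Fin d))
    (L : Fin n → ℝ)
    (v : Ω → Fin n → ℝ)
    (hv1 : ∀ i, (∫ ω, v ω i) = 1) (hv0 : ∀ ω i, 0 ≤ v ω i)
    (hconv : ∀ i x y, f i y ≥ f i x + ⟪g i x, y - x⟫_ℝ)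
    (hsmooth : ∀ i x y, f i x ≤ f i y + ⟪g i y, x - y⟫_ℝ + L i / 2 * ‖x - y‖ ^ 2)
    (xs : EuclideanSpace ℝ (Fin d))
    (hmin : ∀ y, (1 / n : ℝ) * ∑ i, f i xs ≤ (1 / n : ℝ) * ∑ i, f i y)
    (hM : (Matrix.of fun i j : Fin n =>
      ∫ ω, (v ω i - 1) * (v ω j - 1)).IsHermitian) :
    ∀ w, (∫ ω, ‖((n : ℝ)⁻¹ • ∑ i, v ω i • g i w - (n : ℝ)⁻¹ • ∑ i, v ω i • g i xs)
            - ((n : ℝ)⁻¹ • ∑ i, g i w - (n : ℝ)⁻¹ • ∑ i, g i xs)‖ ^ 2)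
      ≤ 2 * ((⨆ i, hM.eigenvalues i) / n)
          * (Finset.univ.sup' (Finset.univ_nonempty_iff.mpr (Fin.pos_iff_nonempty.mp hn)) L)
          * ((1 / n : ℝ) * ∑ i, f i w - (1 / n : ℝ) * ∑ i, f i xs) := by
  intro w
  classical
  set i0 : Fin n := ⟨0, hn⟩ with hi0
  set lam : ℝ := ⨆ i, hM.eigenvalues i with hlam
  set Lmax : ℝ :=
    Finset.univ.sup' (Finset.univ_nonempty_iff.mpr (Fin.pos_iff_nonempty.mp hn)) L with hLm
  have hn0 : (0:ℝ) < n := by exact_mod_cast hn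
  -- d = 0 trivial case
  rcases Nat.eq_zero_or_pos d with rfl | hd1
  · have hw : w = xs := Subsingleton.elim w xs
    rw [hw]
    simp only [sub_self, norm_zero, ne_eq, OfNat.ofNat_ne_zero, not_false_eq_true, zero_pow,
      integral_zero, mul_zero, le_refl]
  -- nonnegativity of lam
  have hMdiag : ∀ i : Fin n, (0:ℝ) ≤ (Matrix.of fun i j : Fin n =>
      ∫ ω, (v ω i - 1) * (v ω j - 1)) i i := by
    intro i
    exact integral_nonneg fun ω => mul_self_nonneg _
  have hlam0 : 0 ≤ lam := le_trans (hMdiag i0) (diag_le_iSup hM i0)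
  -- nonnegativity of L
  have hL0 : ∀ i, 0 ≤ L i := by
    intro i
    set z0 : EuclideanSpace ℝ (Fin d) := 0 with hz0
    set z1 : EuclideanSpace ℝ (Fin d) := EuclideanSpace.single ⟨0, hd1⟩ (1:ℝ) with hz1
    have h1 := hconv i z0 z1
    have h2 := hsmooth i z1 z0
    have hne : ‖z1 - z0‖ ^ 2 = 1 := by
      rw [hz0, sub_zero, hz1, EuclideanSpace.norm_single]
      norm_num
    rw [hne] at h2
    nlinarith [h1, h2]
  have hLmax : ∀ i, L i ≤ Lmax := fun i => Finset.le_sup' L (Finset.mem_univ i)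
  have hLmax0 : 0 ≤ Lmax := le_trans (hL0 i0) (hLmax i0)
  have hFmin : (1 / n : ℝ) * ∑ i, f i xs ≤ (1 / n : ℝ) * ∑ i, f i w := hmin w
  have hRHS0 : 0 ≤ 2 * (lam / n) * Lmax
      * ((1 / n : ℝ) * ∑ i, f i w - (1 / n : ℝ) * ∑ i, f i xs) :=
    mul_nonneg (mul_nonneg (mul_nonneg (by norm_num) (div_nonneg hlam0 hn0.le)) hLmax0)
      (by linarith)
  -- the residual vectors
  set a : Fin n → EuclideanSpace ℝ (Fin d) := fun i => g i w - g i xs with hadef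
  set X : Ω → EuclideanSpace ℝ (Fin d) :=
    fun ω => (n : ℝ)⁻¹ • ∑ i, (v ω i - 1) • a i with hXdef
  have hXeq : ∀ ω, ((n : ℝ)⁻¹ • ∑ i, v ω i • g i w - (n : ℝ)⁻¹ • ∑ i, v ω i • g i xs)
      - ((n : ℝ)⁻¹ • ∑ i, g i w - (n : ℝ)⁻¹ • ∑ i, g i xs) = X ω := by
    intro ω
    rw [hXdef]
    rw [← smul_sub, ← smul_sub, ← smul_sub]
    congr 1
    rw [← Finset.sum_sub_distrib, ← Finset.sum_sub_distrib, ← Finset.sum_sub_distrib]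
    refine Finset.sum_congr rfl fun i _ => ?_
    rw [hadef]
    simp only [sub_smul, one_smul, smul_sub]
    abel
  have hint_congr : (∫ ω, ‖((n : ℝ)⁻¹ • ∑ i, v ω i • g i w - (n : ℝ)⁻¹ • ∑ i, v ω i • g i xs)
      - ((n : ℝ)⁻¹ • ∑ i, g i w - (n : ℝ)⁻¹ • ∑ i, g i xs)‖ ^ 2)
      = ∫ ω, ‖X ω‖ ^ 2 := by
    congr 1
    funext ω
    rw [hXeq ω]
  rw [hint_congr]
  -- non-integrable case
  by_cases hInt : Integrable (fun ω => ‖X ω‖ ^ 2) (volume : Measure Ω)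
  swap
  · rw [integral_undef hInt]
    exact hRHS0
  -- B and basic convexity facts
  set B : Fin n → ℝ := fun i => f i w - f i xs - ⟪g i xs, w - xs⟫_ℝ with hBdef
  have hB0 : ∀ i, 0 ≤ B i := by
    intro i
    have := hconv i xs w
    simp only [hBdef]
    linarith
  have hsq : ∀ i, ‖a i‖ ^ 2 ≤ 2 * L i * B i := by
    intro i
    rcases eq_or_lt_of_le (hL0 i) with hLi | hLi
    · have hgi : g i w = g i xs := by
        refine grad_eq_of_L0 (hconv i) (fun x y => ?_) w xs
        have := hsmooth i x y
        rw [← hLi] at this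
        simpa using this
      have hai : a i = 0 := sub_eq_zero.mpr hgi
      rw [hai, ← hLi]
      simp
    · exact coco_aux (hconv i) (hsmooth i) hLi w xs
  have hca : ∀ j, ‖a j‖ ^ 2 ≤ L j * ⟪a j, w - xs⟫_ℝ := by
    intro j
    rcases eq_or_lt_of_le (hL0 j) with hLj | hLj
    · have hgj : g j w = g j xs := by
        refine grad_eq_of_L0 (hconv j) (fun x y => ?_) w xs
        have := hsmooth j x y
        rw [← hLj] at this
        simpa using this
      have haj : a j = 0 := sub_eq_zero.mpr hgj
      rw [haj]
      simp
    · have h1 := coco_aux (hconv j) (hsmooth j) hLj w xs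
      have h2 := coco_aux (hconv j) (hsmooth j) hLj xs w
      rw [norm_sub_rev] at h2
      have hD : (f j w - f j xs - ⟪g j xs, w - xs⟫_ℝ) + (f j xs - f j w - ⟪g j w, xs - w⟫_ℝ)
          = ⟪a j, w - xs⟫_ℝ := by
        have e2 : ⟪g j w, xs - w⟫_ℝ = -⟪g j w, w - xs⟫_ℝ := by
          rw [← inner_neg_right]
          congr 1
          abel
        rw [hadef]
        simp only [inner_sub_left]
        linarith [e2]
      nlinarith [h1, h2, hD, hLj]
  have hc0 : ∀ j, 0 ≤ ⟪a j, w - xs⟫_ℝ := by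
    intro j
    rcases eq_or_lt_of_le (hL0 j) with hLj | hLj
    · have h := hca j
      rw [← hLj, zero_mul] at h
      have haj : a j = 0 := by
        have hz : ‖a j‖ = 0 := by nlinarith [norm_nonneg (a j)]
        exact norm_eq_zero.mp hz
      rw [haj]
      simp
    · nlinarith [hca j, sq_nonneg ‖a j‖, hLj]
  -- sum of gradients at the minimizer vanishes
  have hgsum : ∑ i, g i xs = 0 := by
    set G : EuclideanSpace ℝ (Fin d) := ∑ i, g i xs with hGdef
    by_contra hG
    set SL : ℝ := ∑ i, L i with hSLdef
    have hSL0 : 0 ≤ SL := Finset.sum_nonneg fun i _ => hL0 i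
    set t : ℝ := (SL + 1)⁻¹ with htdef
    have ht0 : 0 < t := by
      rw [htdef]
      positivity
    set y : EuclideanSpace ℝ (Fin d) := xs - t • G with hydef
    have hy1 : y - xs = -(t • G) := by rw [hydef]; abel
    have hsum : ∑ i, f i y ≤ ∑ i, f i xs + ⟪G, y - xs⟫_ℝ + SL / 2 * ‖y - xs‖ ^ 2 := by
      calc ∑ i, f i y ≤ ∑ i, (f i xs + ⟪g i xs, y - xs⟫_ℝ + L i / 2 * ‖y - xs‖ ^ 2) :=
            Finset.sum_le_sum fun i _ => hsmooth i y xs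
        _ = ∑ i, f i xs + ⟪G, y - xs⟫_ℝ + SL / 2 * ‖y - xs‖ ^ 2 := by
            rw [Finset.sum_add_distrib, Finset.sum_add_distrib, ← sum_inner,
              ← Finset.sum_mul, ← Finset.sum_div]
    rw [hy1, inner_neg_right, real_inner_smul_right, real_inner_self_eq_norm_sq, norm_neg,
      norm_smul, Real.norm_eq_abs, abs_of_pos ht0] at hsum
    have hmins : ∑ i, f i xs ≤ ∑ i, f i y := by
      have h := hmin y
      have hpos : (0:ℝ) < 1 / n := by positivity
      exact (mul_le_mul_iff_right₀ hpos).mp h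
    have hGpos : 0 < ‖G‖ ^ 2 := by
      have := norm_pos_iff.mpr hG
      positivity
    have hts : t * SL = 1 - t := by
      have h : t * (SL + 1) = 1 := inv_mul_cancel₀ (show SL + 1 ≠ 0 by linarith)
      linear_combination h
    have key : t * ‖G‖ ^ 2 ≤ SL / 2 * (t * ‖G‖) ^ 2 := by linarith
    have e : SL / 2 * (t * ‖G‖) ^ 2 = (1 - t) / 2 * (t * ‖G‖ ^ 2) := by
      linear_combination (t * ‖G‖ ^ 2 / 2) * hts
    rw [e] at key
    nlinarith [key, mul_pos ht0 hGpos, ht0]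
  have hBsum : ∑ i, B i = ∑ i, f i w - ∑ i, f i xs := by
    rw [hBdef]
    rw [Finset.sum_sub_distrib, Finset.sum_sub_distrib, ← sum_inner, hgsum]
    simp
  -- integrability of v
  have hv_int : ∀ i, Integrable (fun ω => v ω i) (volume : Measure Ω) := by
    intro i
    by_contra h
    have h1 := hv1 i
    rw [integral_undef h] at h1
    exact one_ne_zero h1.symm
  have hp_meas : ∀ i, AEStronglyMeasurable (fun ω => v ω i - 1) (volume : Measure Ω) :=
    fun i => ((hv_int i).aestronglyMeasurable.sub aestronglyMeasurable_const)
  have hXmeas : AEStronglyMeasurable X (volume : Measure Ω) := by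
    rw [hXdef]
    exact (Finset.aestronglyMeasurable_fun_sum Finset.univ
      (fun i _ => (hp_meas i).smul_const (a i))).const_smul ((n : ℝ)⁻¹)
  have hX2 : MemLp X 2 (volume : Measure Ω) := (memLp_two_iff_integrable_sq_norm hXmeas).mpr hInt
  set u : EuclideanSpace ℝ (Fin d) := w - xs with hu
  set c : Fin n → ℝ := fun j => ⟪a j, u⟫_ℝ with hcdef
  set C : ℝ := ∑ j, c j with hCdef
  have hC0 : 0 ≤ C := Finset.sum_nonneg fun j _ => hc0 j
  set φ : Ω → ℝ := fun ω => ⟪X ω, u⟫_ℝ with hφdef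
  have hφ2 : MemLp φ 2 (volume : Measure Ω) := hX2.inner_const u
  have hφeq : ∀ ω, (n:ℝ) * φ ω = ∑ j, (v ω j - 1) * c j := by
    intro ω
    simp only [hφdef, hXdef]
    rw [real_inner_smul_left, sum_inner]
    rw [← mul_assoc, mul_inv_cancel₀ (ne_of_gt hn0), one_mul]
    refine Finset.sum_congr rfl fun j _ => ?_
    rw [real_inner_smul_left]
  have hp2 : ∀ i, a i ≠ 0 → MemLp (fun ω => v ω i - 1) 2 (volume : Measure Ω) := by
    intro i hai
    have hna : 0 < ‖a i‖ ^ 2 := by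
      have := norm_pos_iff.mpr hai
      positivity
    have hLi : 0 < L i := by
      rcases eq_or_lt_of_le (hL0 i) with h | h
      · exfalso
        have hc := hca i
        rw [← h, zero_mul] at hc
        linarith
      · exact h
    have hci : 0 < c i := by
      by_contra hcc
      push_neg at hcc
      have hmn : L i * c i ≤ 0 := mul_nonpos_of_nonneg_of_nonpos hLi.le hcc
      linarith [hca i]
    have hsum_ge : ∀ ω, c i * (v ω i - 1) ≤ (n:ℝ) * φ ω + C := by
      intro ω
      rw [hφeq ω]
      have hsplit : ∑ j, (v ω j - 1) * c j
          = (v ω i - 1) * c i + ∑ j ∈ Finset.univ.erase i, (v ω j - 1) * c j :=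
        (Finset.add_sum_erase _ _ (Finset.mem_univ i)).symm
      have h1 : ∀ j ∈ Finset.univ.erase i, -(c j) ≤ (v ω j - 1) * c j := by
        intro j _
        have h := mul_le_mul_of_nonneg_right
          (show (-1:ℝ) ≤ v ω j - 1 by linarith [hv0 ω j]) (hc0 j)
        linarith [h]
      have hsub : ∑ j ∈ Finset.univ.erase i, c j ≤ C := by
        rw [hCdef]
        exact Finset.sum_le_sum_of_subset_of_nonneg (Finset.erase_subset i Finset.univ)
          (fun j _ _ => hc0 j)
      have h2 : -C ≤ ∑ j ∈ Finset.univ.erase i, (v ω j - 1) * c j := by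
        have h3 := Finset.sum_le_sum h1
        rw [Finset.sum_neg_distrib] at h3
        linarith
      have hcomm : c i * (v ω i - 1) = (v ω i - 1) * c i := mul_comm _ _
      linarith [hsplit, h2, hcomm]
    have hψ : MemLp (fun ω => 1 + (c i)⁻¹ * ((n:ℝ) * ‖φ ω‖ + C)) 2 (volume : Measure Ω) := by
      have h1 : MemLp (fun ω => ‖φ ω‖) 2 (volume : Measure Ω) := hφ2.norm
      have h2 : MemLp (fun ω => (n:ℝ) * ‖φ ω‖) 2 (volume : Measure Ω) := h1.const_mul _
      have h3 : MemLp (fun ω => (n:ℝ) * ‖φ ω‖ + C) 2 (volume : Measure Ω) :=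
        h2.add (memLp_const C)
      exact (memLp_const (1:ℝ)).add (h3.const_mul (c i)⁻¹)
    refine hψ.of_le (hp_meas i) (ae_of_all _ fun ω => ?_)
    have ht0 : 0 ≤ (c i)⁻¹ * ((n:ℝ) * ‖φ ω‖ + C) :=
      mul_nonneg (inv_nonneg.mpr hci.le) (add_nonneg (mul_nonneg hn0.le (norm_nonneg _)) hC0)
    rw [Real.norm_eq_abs, Real.norm_eq_abs,
      abs_of_nonneg (show (0:ℝ) ≤ 1 + (c i)⁻¹ * ((n:ℝ) * ‖φ ω‖ + C) by linarith)]
    rw [abs_le]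
    constructor
    · linarith [hv0 ω i]
    · have hb : (v ω i - 1) * c i ≤ (n:ℝ) * ‖φ ω‖ + C := by
        have hs := hsum_ge ω
        have hφa : (n:ℝ) * φ ω ≤ (n:ℝ) * ‖φ ω‖ := by
          apply mul_le_mul_of_nonneg_left _ hn0.le
          rw [Real.norm_eq_abs]
          exact le_abs_self _
        have hcomm : c i * (v ω i - 1) = (v ω i - 1) * c i := mul_comm _ _
        linarith
      have hq : v ω i - 1 ≤ ((n:ℝ) * ‖φ ω‖ + C) / c i := (le_div_iff₀ hci).mpr hb
      rw [div_eq_mul_inv, mul_comm] at hq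
      linarith
  have hterm : ∀ i j, Integrable (fun ω => ((v ω i - 1) * (v ω j - 1)) * ⟪a i, a j⟫_ℝ)
      (volume : Measure Ω) := by
    intro i j
    by_cases hai : a i = 0
    · simp only [hai, inner_zero_left, mul_zero]
      exact integrable_const 0
    · by_cases haj : a j = 0
      · simp only [haj, inner_zero_right, mul_zero]
        exact integrable_const 0
      · exact (memLp_two_mul_integrable (hp2 i hai) (hp2 j haj)).mul_const _
  have hXexp : ∀ ω, ‖X ω‖ ^ 2
      = (n:ℝ)⁻¹ ^ 2 * ∑ i, ∑ j, ((v ω i - 1) * (v ω j - 1)) * ⟪a i, a j⟫_ℝ := by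
    intro ω
    rw [← real_inner_self_eq_norm_sq, hXdef]
    simp only
    rw [real_inner_smul_left, real_inner_smul_right]
    have hSS : ⟪∑ i, (v ω i - 1) • a i, ∑ j, (v ω j - 1) • a j⟫_ℝ
        = ∑ i, ∑ j, ((v ω i - 1) * (v ω j - 1)) * ⟪a i, a j⟫_ℝ := by
      rw [sum_inner]
      refine Finset.sum_congr rfl fun i _ => ?_
      rw [real_inner_smul_left, inner_sum, Finset.mul_sum]
      refine Finset.sum_congr rfl fun j _ => ?_
      rw [real_inner_smul_right]
      ring
    rw [hSS]
    ring
  have hIeq : ∫ ω, ‖X ω‖ ^ 2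
      = (n:ℝ)⁻¹ ^ 2 * ∑ i, ∑ j, ((Matrix.of fun i j : Fin n =>
          ∫ ω, (v ω i - 1) * (v ω j - 1)) i j) * ⟪a i, a j⟫_ℝ := by
    calc ∫ ω, ‖X ω‖ ^ 2
        = ∫ ω, (n:ℝ)⁻¹ ^ 2 * ∑ i, ∑ j, ((v ω i - 1) * (v ω j - 1)) * ⟪a i, a j⟫_ℝ :=
          integral_congr_ae (ae_of_all _ hXexp)
      _ = (n:ℝ)⁻¹ ^ 2 * ∫ ω, ∑ i, ∑ j, ((v ω i - 1) * (v ω j - 1)) * ⟪a i, a j⟫_ℝ :=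
          integral_const_mul _ _
      _ = (n:ℝ)⁻¹ ^ 2 * ∑ i, ∫ ω, ∑ j, ((v ω i - 1) * (v ω j - 1)) * ⟪a i, a j⟫_ℝ := by
          rw [integral_finset_sum _ (fun i _ => integrable_finset_sum _ (fun j _ => hterm i j))]
      _ = (n:ℝ)⁻¹ ^ 2 * ∑ i, ∑ j, ((Matrix.of fun i j : Fin n =>
          ∫ ω, (v ω i - 1) * (v ω j - 1)) i j) * ⟪a i, a j⟫_ℝ := by
          congr 1
          refine Finset.sum_congr rfl fun i _ => ?_
          rw [integral_finset_sum _ (fun j _ => hterm i j)]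
          refine Finset.sum_congr rfl fun j _ => ?_
          rw [integral_mul_const]
          rfl
  rw [hIeq]
  have hquad := quad_vec hM a
  have hstep2 : ∑ i, ‖a i‖ ^ 2 ≤ 2 * Lmax * ∑ i, B i := by
    calc ∑ i, ‖a i‖ ^ 2 ≤ ∑ i, 2 * L i * B i := Finset.sum_le_sum fun i _ => hsq i
      _ ≤ ∑ i, 2 * Lmax * B i := by
          refine Finset.sum_le_sum fun i _ => ?_
          have h1 := hB0 i
          have h2 := hLmax i
          nlinarith
      _ = 2 * Lmax * ∑ i, B i := by rw [← Finset.mul_sum]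
  calc (n:ℝ)⁻¹ ^ 2 * ∑ i, ∑ j, ((Matrix.of fun i j : Fin n =>
          ∫ ω, (v ω i - 1) * (v ω j - 1)) i j) * ⟪a i, a j⟫_ℝ
      ≤ (n:ℝ)⁻¹ ^ 2 * (lam * ∑ i, ‖a i‖ ^ 2) :=
        mul_le_mul_of_nonneg_left hquad (by positivity)
    _ ≤ (n:ℝ)⁻¹ ^ 2 * (lam * (2 * Lmax * ∑ i, B i)) :=
        mul_le_mul_of_nonneg_left (mul_le_mul_of_nonneg_left hstep2 hlam0) (by positivity)
    _ = 2 * (lam / n) * Lmax * ((1 / n : ℝ) * ∑ i, f i w - (1 / n : ℝ) * ∑ i, f i xs) := by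
        rw [hBsum]
        field_simp
end

section
/- Let p ∈ (0,1], q = 1−p, and define the step-size sequence α_{k} with α_0 = α and E[α_k] = ((q^{(3k+2)/2}(1−√q) + p)/(1 − q^{3/2}))·α. Then E[α_k] ≥ (2/3)·α for all k ≥ 0, i.e., (q^{(3k+2)/2}(1−√q) + 1 − q)/(1 − q^{3/2}) ≥ 2/3 for all q ∈ [0,1) and k ≥ 0. -/
theorem step_size_lower_bound (q : ℝ) (hq0 : 0 ≤ q) (hq1 : q < 1) (k : ℕ) :
    q ^ ((3 * (k : ℝ) + 2) / 2) * (1 - Real.sqrt q) + 1 - q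
      ≥ (2 / 3) * (1 - q ^ ((3 : ℝ) / 2)) := by
  set s := Real.sqrt q with hs
  have hsq : s ^ 2 = q := Real.sq_sqrt hq0
  have hs0 : 0 ≤ s := Real.sqrt_nonneg q
  have hs1 : s ≤ 1 := Real.sqrt_le_one.mpr hq1.le
  have h32 : q ^ ((3 : ℝ) / 2) = s ^ 3 := by
    rw [hs, Real.sqrt_eq_rpow, ← Real.rpow_natCast (q ^ ((1:ℝ)/2)) 3,
      ← Real.rpow_mul hq0]
    norm_num
  have hterm : 0 ≤ q ^ ((3 * (k : ℝ) + 2) / 2) * (1 - s) :=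
    mul_nonneg (Real.rpow_nonneg hq0 _) (by linarith)
  rw [h32]
  nlinarith [sq_nonneg (1 - s), mul_nonneg (mul_nonneg hs0 hs0) hs0]
end

section
/- Define ζ_p = (7−4p)(1−(1−p)^{3/2})/(p(2−p)(3−2p)) for p ∈ (0,1]. Then 7/4 ≤ ζ_p ≤ 3 for all p ∈ (0,1]. -/
theorem zeta_bounds (p : ℝ) (hp0 : 0 < p) (hp1 : p ≤ 1) :
    7 / 4 ≤ (7 - 4 * p) * (1 - (1 - p) ^ ((3 : ℝ) / 2)) / (p * (2 - p) * (3 - 2 * p)) ∧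
    (7 - 4 * p) * (1 - (1 - p) ^ ((3 : ℝ) / 2)) / (p * (2 - p) * (3 - 2 * p)) ≤ 3 := by
  have hq : (0:ℝ) ≤ 1 - p := by linarith
  set s := Real.sqrt (1 - p) with hs
  have hs0 : 0 ≤ s := Real.sqrt_nonneg _
  have hs2 : s ^ 2 = 1 - p := Real.sq_sqrt hq
  have hs1 : s ≤ 1 := by nlinarith
  have key : (1 - p) ^ ((3 : ℝ) / 2) = s ^ 3 := by
    rw [show ((3:ℝ)/2) = (1/2) * (3:ℕ) by norm_num, Real.rpow_mul hq,
      Real.rpow_natCast, ← Real.sqrt_eq_rpow]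
  rw [key]
  clear_value s
  have hpe : p = 1 - s ^ 2 := by linarith
  subst hpe
  have hD : 0 < (1 - s ^ 2) * (2 - (1 - s ^ 2)) * (3 - 2 * (1 - s ^ 2)) := by
    have a : 0 < 1 - s ^ 2 := by linarith
    have b : 0 < 2 - (1 - s ^ 2) := by nlinarith [sq_nonneg s]
    have c : 0 < 3 - 2 * (1 - s ^ 2) := by nlinarith [sq_nonneg s]
    exact mul_pos (mul_pos a b) c
  have h1 : 0 ≤ (1 - s)^2 * (14*s^4 + 12*s^3 + 17*s^2 + 10*s + 5) := by
    apply mul_nonneg (sq_nonneg _)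
    nlinarith [pow_nonneg hs0 4, pow_nonneg hs0 3, sq_nonneg s]
  have h2 : 0 ≤ (1 - s) * s^2 * (6*s^3 + 2*s^2 + 5*s + 2) := by
    apply mul_nonneg (mul_nonneg (by linarith) (sq_nonneg s))
    nlinarith [pow_nonneg hs0 3, sq_nonneg s]
  constructor
  · rw [le_div_iff₀ hD]; nlinarith [h1]
  · rw [div_le_iff₀ hD]; nlinarith [h2]
end
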